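/- arXiv:2107.02060 — 4 statements merged into one kernel-verified Lean document; each statement's English description precedes it below -/
import Mathlib

section
/- Let p₁, …, pₙ be distinct primes each congruent to 1 mod 4, and write pⱼ = aⱼ² + bⱼ² with aⱼ, bⱼ positive integers. Define qⱼ = (aⱼ + i bⱼ)/(aⱼ − i bⱼ), a complex number of modulus 1 with rational real and imaginary parts. Then the qⱼ are multiplicatively independent over ℤ: if q₁^{e₁} ⋯ qₙ^{eₙ} = 1 with eⱼ ∈ ℤ, then e₁ = ⋯ = eₙ = 0. -/
open Complex

open GaussianInt in
lemma gi_prime_of_norm_prime (z : GaussianInt) (hz : Prime (Zsqrtd.norm z)) : Prime z := by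
  have hirr : Irreducible z := by
    constructor
    · intro hu
      have h1 : (Zsqrtd.norm z).natAbs = 1 := Zsqrtd.norm_eq_one_iff.mpr hu
      exact hz.not_unit (Int.isUnit_iff_natAbs_eq.mpr h1)
    · intro x y hxy
      have hn : Zsqrtd.norm z = Zsqrtd.norm x * Zsqrtd.norm y := by rw [hxy, Zsqrtd.norm_mul]
      rcases hz.irreducible.isUnit_or_isUnit hn with h | h
      · left; rwa [Int.isUnit_iff_natAbs_eq, Zsqrtd.norm_eq_one_iff] at h
      · right; rwa [Int.isUnit_iff_natAbs_eq, Zsqrtd.norm_eq_one_iff] at h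
  exact hirr.prime

/-- Multiplicative independence of the numbers `qⱼ = (aⱼ + i bⱼ)/(aⱼ - i bⱼ)` arising
from distinct primes `pⱼ ≡ 1 (mod 4)` with `pⱼ = aⱼ² + bⱼ²`. -/
theorem stmt1 (n : ℕ) (p : Fin n → ℕ) (hp : ∀ j, (p j).Prime)
    (h4 : ∀ j, p j % 4 = 1) (hinj : Function.Injective p)
    (a b : Fin n → ℤ) (ha : ∀ j, 0 < a j) (hb : ∀ j, 0 < b j)
    (hab : ∀ j, a j ^ 2 + b j ^ 2 = (p j : ℤ))
    (e : Fin n → ℤ)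
    (h : ∏ j, (((a j : ℂ) + (b j : ℂ) * Complex.I) /
        ((a j : ℂ) - (b j : ℂ) * Complex.I)) ^ (e j) = 1) :
    ∀ j, e j = 0 := by
  -- Gaussian integers z j = a j + b j * i
  set z : Fin n → GaussianInt := fun j => ⟨a j, b j⟩ with hzdef
  have hnorm : ∀ j, Zsqrtd.norm (z j) = (p j : ℤ) := by
    intro j; rw [Zsqrtd.norm_def, ← hab j]; ring
  have hnormstar : ∀ j, Zsqrtd.norm (star (z j)) = (p j : ℤ) := by
    intro j; rw [Zsqrtd.norm_conj]; exact hnorm j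
  have hPk : ∀ j, Prime ((p j : ℤ)) := fun j => Int.prime_iff_natAbs_prime.mpr (by simpa using hp j)
  have hprime : ∀ j, Prime (z j) := fun j =>
    gi_prime_of_norm_prime _ (by rw [hnorm]; exact hPk j)
  have hnormdvd : ∀ x y : GaussianInt, x ∣ y → Zsqrtd.norm x ∣ Zsqrtd.norm y := by
    rintro x y ⟨c, rfl⟩; exact ⟨Zsqrtd.norm c, Zsqrtd.norm_mul x c⟩
  -- z k does not divide z j for j ≠ k
  have hnd1 : ∀ j k : Fin n, k ≠ j → ¬ z k ∣ z j := by
    intro j k hkj hdvd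
    have := hnormdvd _ _ hdvd
    rw [hnorm, hnorm, Int.natCast_dvd_natCast] at this
    exact hkj (hinj ((Nat.prime_dvd_prime_iff_eq (hp k) (hp j)).mp this))
  -- z k does not divide star (z j) for any j
  have hnd2 : ∀ j k : Fin n, ¬ z k ∣ star (z j) := by
    intro j k hdvd
    by_cases hkj : k = j
    · subst hkj
      -- z k ∣ star (z k), so z k ∣ z k + star z k = 2 * a k
      have hsum : z k + star (z k) = ((2 * a k : ℤ) : GaussianInt) := by
        ext <;> simp [hzdef] <;> ring
      have h2a : z k ∣ ((2 * a k : ℤ) : GaussianInt) := hsum ▸ dvd_add dvd_rfl hdvd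
      have hn2 : (p k : ℤ) ∣ (2 * a k) * (2 * a k) := by
        have := hnormdvd _ _ h2a
        rwa [hnorm, Zsqrtd.norm_intCast] at this
      have hp2 : (p k : ℤ) ∣ 2 * a k := (hPk k).dvd_mul.mp hn2 |>.elim id id
      have hpa : (p k : ℤ) ∣ a k := by
        rcases (hPk k).dvd_mul.mp hp2 with h2 | hA
        · have : (p k : ℕ) ∣ 2 := by exact_mod_cast h2
          have hle2 := Nat.le_of_dvd (by norm_num) this
          have := (hp k).two_le
          have h4k := h4 k
          omega
        · exact hA
      have hle : (p k : ℤ) ≤ a k := Int.le_of_dvd (ha k) hpa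
      have h2p : (2 : ℤ) ≤ (p k : ℤ) := by exact_mod_cast (hp k).two_le
      have := hab k
      nlinarith [ha k, hb k, sq_nonneg (a k), sq_nonneg (b k)]
    · have := hnormdvd _ _ hdvd
      rw [hnorm, hnormstar, Int.natCast_dvd_natCast] at this
      exact hkj (hinj ((Nat.prime_dvd_prime_iff_eq (hp k) (hp j)).mp this))
  -- Complex side: pass to units of ℂ
  have hw : ∀ j, ((a j : ℂ) + (b j : ℂ) * Complex.I) ≠ 0 := by
    intro j hj
    have := congrArg Complex.im hj
    simp at this
    exact (hb j).ne' (by exact_mod_cast this)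
  have hwb : ∀ j, ((a j : ℂ) - (b j : ℂ) * Complex.I) ≠ 0 := by
    intro j hj
    have := congrArg Complex.im hj
    simp at this
    exact (hb j).ne' (by exact_mod_cast this)
  set U : Fin n → ℂˣ := fun j => Units.mk0 _ (hw j) with hUdef
  set V : Fin n → ℂˣ := fun j => Units.mk0 _ (hwb j) with hVdef
  have hU : ∏ j, (U j * (V j)⁻¹) ^ e j = 1 := by
    apply Units.ext
    rw [show ((∏ j, (U j * (V j)⁻¹) ^ e j : ℂˣ) : ℂ) = ∏ j, (((U j * (V j)⁻¹) ^ e j : ℂˣ) : ℂ) from map_prod (Units.coeHom ℂ) _ _]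
    simpa [div_eq_mul_inv, Units.val_zpow_eq_zpow_val, hUdef, hVdef] using h
  have hUV : ∏ j, (U j) ^ e j = ∏ j, (V j) ^ e j := by
    have : (∏ j, (U j) ^ e j) * (∏ j, (V j) ^ e j)⁻¹ = 1 := by
      rw [← Finset.prod_inv_distrib, ← Finset.prod_mul_distrib]
      rw [← hU]
      congr 1; ext j
      rw [mul_zpow, inv_zpow]
    exact mul_inv_eq_one.mp this
  set f : Fin n → ℕ := fun j => (e j).toNat with hfdef
  set g : Fin n → ℕ := fun j => (-e j).toNat with hgdef
  have he : ∀ j, e j = (f j : ℤ) - (g j : ℤ) := by intro j; simp only [hfdef, hgdef]; omega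
  have hUV2 : (∏ j, (U j) ^ f j) * ∏ j, (V j) ^ g j
      = (∏ j, (V j) ^ f j) * ∏ j, (U j) ^ g j := by
    have expand : ∀ (W : Fin n → ℂˣ), ∏ j, (W j) ^ e j
        = (∏ j, (W j) ^ f j) * (∏ j, (W j) ^ g j)⁻¹ := by
      intro W
      rw [← Finset.prod_inv_distrib, ← Finset.prod_mul_distrib]
      congr 1; ext j
      rw [he j]; simp [zpow_sub, div_eq_mul_inv]
    rw [expand U, expand V, ← div_eq_mul_inv, ← div_eq_mul_inv,
      div_eq_div_iff_mul_eq_mul] at hUV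
    exact hUV
  -- transfer to ℤ[i]
  have hwz : ∀ j, (GaussianInt.toComplex (z j)) = (a j : ℂ) + (b j : ℂ) * Complex.I := by
    intro j; simp [hzdef, GaussianInt.toComplex_def]
  have hwbz : ∀ j, (GaussianInt.toComplex (star (z j))) = (a j : ℂ) - (b j : ℂ) * Complex.I := by
    intro j; simp [hzdef, GaussianInt.toComplex_def, sub_eq_add_neg]
  have hZ : (∏ j, (z j) ^ f j) * ∏ j, (star (z j)) ^ g j
      = (∏ j, (star (z j)) ^ f j) * ∏ j, (z j) ^ g j := by
    rw [← GaussianInt.toComplex_inj]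
    have := congrArg (Units.val) hUV2
    rw [show (Units.val) = (Units.coeHom ℂ : ℂˣ →* ℂ) from rfl] at this
    rw [map_mul, map_mul, map_prod, map_prod, map_prod, map_prod] at this
    simp only [map_pow, Units.coeHom_apply, hUdef, hVdef, Units.val_mk0] at this
    simpa [map_mul, map_prod, map_pow, hwz, hwbz] using this
  -- conclude per index
  intro k
  have key : ∀ (A B : Fin n → GaussianInt) (m m' : Fin n → ℕ),
      (∏ j, (A j) ^ m j) * ∏ j, (B j) ^ m' j
        = (∏ j, (B j) ^ m j) * ∏ j, (A j) ^ m' j →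
      A = z → B = (fun j => star (z j)) → m k ≤ m' k := by
    rintro A B m m' heq rfl rfl
    have h1 : z k ^ m k ∣ (∏ j, (star (z j)) ^ m j) * ∏ j, (z j) ^ m' j := by
      rw [← heq]
      exact Dvd.dvd.mul_right (Finset.dvd_prod_of_mem _ (Finset.mem_univ k)) _
    have h2 : ¬ z k ∣ ∏ j, (star (z j)) ^ m j := by
      rw [(hprime k).dvd_finset_prod_iff]
      rintro ⟨j, -, hdvd⟩
      exact hnd2 j k ((hprime k).dvd_of_dvd_pow hdvd)
    have h3 : z k ^ m k ∣ ∏ j, (z j) ^ m' j :=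
      (hprime k).pow_dvd_of_dvd_mul_left _ h2 h1
    rw [← Finset.mul_prod_erase Finset.univ _ (Finset.mem_univ k)] at h3
    have h4 : ¬ z k ∣ ∏ j ∈ Finset.univ.erase k, (z j) ^ m' j := by
      rw [(hprime k).dvd_finset_prod_iff]
      rintro ⟨j, hj, hdvd⟩
      exact hnd1 j k (Finset.ne_of_mem_erase hj).symm ((hprime k).dvd_of_dvd_pow hdvd)
    have h5 : z k ^ m k ∣ z k ^ m' k :=
      (hprime k).pow_dvd_of_dvd_mul_right _ h4 h3
    exact (pow_dvd_pow_iff (hprime k).ne_zero (hprime k).not_unit).mp h5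
  have hfg : f k ≤ g k := key _ _ _ _ hZ rfl rfl
  have hgf : g k ≤ f k := by
    refine key _ _ _ _ ?_ rfl rfl
    calc (∏ j, (z j) ^ g j) * ∏ j, (star (z j)) ^ f j
        = (∏ j, (star (z j)) ^ f j) * ∏ j, (z j) ^ g j := mul_comm _ _
      _ = (∏ j, (z j) ^ f j) * ∏ j, (star (z j)) ^ g j := hZ.symm
      _ = (∏ j, (star (z j)) ^ g j) * ∏ j, (z j) ^ f j := mul_comm _ _
  have : f k = g k := le_antisymm hfg hgf
  simp only [hfdef, hgdef] at this
  omega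
end

section
/- The conclusion of the previous bounded-witness lemma can fail for non-strict inequalities: the statement 'for all x ∈ [−1,1] there exists y ∈ ℝ with x²(1 − x·y) ≤ 0' is true, but for every constant C the statement 'for all x ∈ [−1,1] there exists y ∈ [−C, C] with x²(1 − x·y) ≤ 0' is false. -/
/-- The bounded-witness lemma fails for non-strict inequalities:
`∀ x ∈ [-1,1], ∃ y, x²(1 - xy) ≤ 0` is true, but for every `C` the statement
`∀ x ∈ [-1,1], ∃ y ∈ [-C,C], x²(1 - xy) ≤ 0` is false. -/
theorem stmt6 :
    (∀ x ∈ Set.Icc (-1 : ℝ) 1, ∃ y : ℝ, x ^ 2 * (1 - x * y) ≤ 0) ∧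
    (∀ C : ℝ, ¬ ∀ x ∈ Set.Icc (-1 : ℝ) 1, ∃ y ∈ Set.Icc (-C) C, x ^ 2 * (1 - x * y) ≤ 0) := by
  constructor
  · intro x _
    refine ⟨1 / x, ?_⟩
    rcases eq_or_ne x 0 with h | h
    · simp [h]
    · field_simp; simp
  · intro C h
    set M : ℝ := max C 1 with hM
    have hM1 : (1 : ℝ) ≤ M := le_max_right _ _
    have hMpos : (0 : ℝ) < M + 1 := by linarith
    set x : ℝ := 1 / (M + 1) with hx
    have hxpos : 0 < x := by positivity
    have hxle : x ≤ 1 := by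
      rw [hx, div_le_one hMpos]; linarith
    obtain ⟨y, hy, hineq⟩ := h x ⟨by linarith, hxle⟩
    have hyC : y ≤ M := le_trans hy.2 (le_max_left _ _)
    have hxy : x * y < 1 := by
      have : x * y ≤ x * M := by nlinarith
      have hxM : x * M < 1 := by
        rw [hx, div_mul_eq_mul_div, div_lt_one hMpos]; linarith
      linarith
    nlinarith [sq_nonneg x, pow_pos hxpos 2]
end

section
/- Let K be a compact metric space, let F : K → 𝒦(M) be a Hausdorff-continuous map into nonempty compact subsets of a metric space M, and let g : K × M → ℝ be continuous. Then the function h(x) = max_{y ∈ F(x)} g(x, y) is well-defined and continuous on K. -/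
open TopologicalSpace

/-- For `K` a compact metric space, `F : K → 𝒦(M)` Hausdorff-continuous and
`g : K × M → ℝ` continuous, the value function `h(x) = max_{y ∈ F(x)} g(x, y)` is
well-defined (the maximum is attained) and continuous. -/
theorem stmt10 {K M : Type*} [MetricSpace K] [CompactSpace K] [MetricSpace M]
    (F : K → NonemptyCompacts M) (hF : Continuous F)
    (g : K × M → ℝ) (hg : Continuous g) :
    (∀ x : K, ∃ y ∈ (F x : Set M),
      IsGreatest ((fun y => g (x, y)) '' (F x : Set M)) (g (x, y))) ∧
    Continuous (fun x : K => sSup ((fun y => g (x, y)) '' (F x : Set M))) := by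
  have hmax : ∀ x : K, ∃ y ∈ (F x : Set M),
      IsGreatest ((fun y => g (x, y)) '' (F x : Set M)) (g (x, y)) := by
    intro x
    obtain ⟨y, hy, hmaxy⟩ := (F x).isCompact.exists_isMaxOn (F x).nonempty
      ((hg.comp (Continuous.prodMk_right x)).continuousOn)
    refine ⟨y, hy, Set.mem_image_of_mem _ hy, ?_⟩
    rintro z ⟨w, hw, rfl⟩
    exact hmaxy hw
  refine ⟨hmax, ?_⟩
  -- value of the sup
  have hval : ∀ x : K, ∃ y ∈ (F x : Set M),
      sSup ((fun y => g (x, y)) '' (F x : Set M)) = g (x, y) := by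
    intro x
    obtain ⟨y, hy, hgy⟩ := hmax x
    exact ⟨y, hy, hgy.csSup_eq⟩
  rw [Metric.continuous_iff]
  intro b ε hε
  -- uniform continuity of g at the compact set {b} ×ˢ F b
  have hC : IsCompact ({b} ×ˢ (F b : Set M)) := isCompact_singleton.prod (F b).isCompact
  have hr : {z : ℝ × ℝ | dist z.1 z.2 < ε / 2} ∈ uniformity ℝ :=
    Metric.dist_mem_uniformity (by linarith)
  have huc := hC.uniformContinuousAt_of_continuousAt g
    (fun a _ => hg.continuousAt) hr
  obtain ⟨δ₁, hδ₁pos, hδ₁⟩ := Metric.mem_uniformity_dist.1 huc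
  -- continuity of F at b
  obtain ⟨δ₂, hδ₂pos, hδ₂⟩ := Metric.continuous_iff.1 hF b (δ₁ / 2) (by linarith)
  refine ⟨min δ₂ (δ₁ / 2), by positivity, fun x hx => ?_⟩
  have hxb : dist x b < δ₂ := lt_of_lt_of_le hx (min_le_left _ _)
  have hxb' : dist x b < δ₁ / 2 := lt_of_lt_of_le hx (min_le_right _ _)
  have hFdist : Metric.hausdorffDist (F x : Set M) (F b : Set M) < δ₁ / 2 := by
    have := hδ₂ x hxb
    rwa [Metric.NonemptyCompacts.dist_eq] at this
  have hne : EMetric.hausdorffEdist (F x : Set M) (F b : Set M) ≠ ⊤ :=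
    Metric.hausdorffEdist_ne_top_of_nonempty_of_bounded (F x).nonempty (F b).nonempty
      (F x).isCompact.isBounded (F b).isCompact.isBounded
  -- key estimate: for p = (b, y') ∈ C and q = (x, y) with dist y y' < δ₁/2
  have key : ∀ y' ∈ (F b : Set M), ∀ y : M, dist y y' < δ₁ / 2 →
      dist (g (b, y')) (g (x, y)) < ε / 2 := by
    intro y' hy' y hyy'
    have hmem : ((b, y') : K × M) ∈ ({b} ×ˢ (F b : Set M)) := ⟨rfl, hy'⟩
    have hd : dist ((b, y') : K × M) (x, y) < δ₁ := by
      rw [Prod.dist_eq]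
      simp only [max_lt_iff]
      constructor
      · rw [dist_comm]; linarith
      · rw [dist_comm]; linarith
    exact hδ₁ hd hmem
  obtain ⟨yx, hyx, hvx⟩ := hval x
  obtain ⟨yb, hyb, hvb⟩ := hval b
  rw [Real.dist_eq, hvx, hvb, abs_sub_lt_iff]
  constructor
  · -- g (x, yx) - g (b, yb) < ε
    obtain ⟨y', hy', hdy⟩ := Metric.exists_dist_lt_of_hausdorffDist_lt hyx hFdist hne
    have h1 : dist (g (b, y')) (g (x, yx)) < ε / 2 := key y' hy' yx hdy
    have h2 : g (b, y') ≤ g (b, yb) := by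
      obtain ⟨_, _, hgb⟩ := hmax b
      have := (hmax b).choose_spec.2.2 (Set.mem_image_of_mem _ hy')
      -- yb is a maximizer; but hmax b's witness might differ from yb. Use IsGreatest directly.
      obtain ⟨w, hw, hwg⟩ := hmax b
      have hsup : g (b, y') ≤ sSup ((fun y => g (b, y)) '' (F b : Set M)) :=
        le_csSup hwg.bddAbove (Set.mem_image_of_mem _ hy')
      rwa [hvb] at hsup
    have := abs_sub_lt_iff.1 (by rwa [Real.dist_eq] at h1)
    linarith [this.2]
  · -- g (b, yb) - g (x, yx) < ε
    have hFdist' : Metric.hausdorffDist (F b : Set M) (F x : Set M) < δ₁ / 2 := by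
      rwa [Metric.hausdorffDist_comm] at hFdist
    obtain ⟨y'', hy'', hdy⟩ := Metric.exists_dist_lt_of_hausdorffDist_lt hyb hFdist'
      (by rw [Metric.hausdorffEDist_comm]; exact hne)
    have h1 : dist (g (b, yb)) (g (x, y'')) < ε / 2 :=
      key yb hyb y'' (by rw [dist_comm]; linarith)
    have h2 : g (x, y'') ≤ g (x, yx) := by
      obtain ⟨w, hw, hwg⟩ := hmax x
      have hsup : g (x, y'') ≤ sSup ((fun y => g (x, y)) '' (F x : Set M)) :=
        le_csSup hwg.bddAbove (Set.mem_image_of_mem _ hy'')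
      rwa [hvx] at hsup
    have := abs_sub_lt_iff.1 (by rwa [Real.dist_eq] at h1)
    linarith [this.1]
end

section
/- Let A ∈ ℝ^{n×n} be diagonalizable over ℂ with all eigenvalues of modulus exactly 1, say A = Q diag(λ₁,…,λₙ) Q⁻¹. Let S ⊆ 𝕋ⁿ be the closure of {(λ₁ᵏ,…,λₙᵏ) : k ∈ ℕ}. Then for any x ∈ ℝⁿ, the closure of the orbit {Aᵏ x : k ∈ ℕ} equals {Q diag(z₁,…,zₙ) Q⁻¹ x : (z₁,…,zₙ) ∈ S}. -/
/-- For a real matrix `A` diagonalizable over `ℂ` as `Q diag(λ) Q⁻¹` with all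
eigenvalues of modulus 1, the closure of the orbit `{Aᵏ x}` equals the image of the
closure `S` of the power sequence `{(λ₁ᵏ,…,λₙᵏ)}` under the diagonal twists
`z ↦ Q diag(z) Q⁻¹ x`. -/
theorem stmt16 {n : ℕ} (A : Matrix (Fin n) (Fin n) ℝ)
    (Q : Matrix (Fin n) (Fin n) ℂ) (hQ : IsUnit Q.det)
    (lam : Fin n → ℂ) (hlam : ∀ i, ‖lam i‖ = 1)
    (hA : A.map (Complex.ofReal ·) = Q * Matrix.diagonal lam * Q⁻¹)
    (x : Fin n → ℝ) :
    closure {v : Fin n → ℂ |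
        ∃ k : ℕ, v = ((A ^ k).map (Complex.ofReal ·)).mulVec (fun i => (x i : ℂ))} =
      {v : Fin n → ℂ |
        ∃ z ∈ closure {w : Fin n → ℂ | ∃ k : ℕ, w = fun i => lam i ^ k},
          v = (Q * Matrix.diagonal z * Q⁻¹).mulVec (fun i => (x i : ℂ))} := by
  set f : (Fin n → ℂ) → (Fin n → ℂ) :=
    fun z => (Q * Matrix.diagonal z * Q⁻¹).mulVec (fun i => (x i : ℂ)) with hf
  set P : Set (Fin n → ℂ) := {w : Fin n → ℂ | ∃ k : ℕ, w = fun i => lam i ^ k} with hP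
  -- conjugation formula for powers
  have hconj : ∀ k : ℕ, (Q * Matrix.diagonal lam * Q⁻¹) ^ k
      = Q * Matrix.diagonal (fun i => lam i ^ k) * Q⁻¹ := by
    intro k
    induction k with
    | zero =>
        simp [Matrix.diagonal_one, Matrix.mul_nonsing_inv Q hQ]
    | succ k ih =>
        rw [pow_succ, ih]
        have : Q * Matrix.diagonal (fun i => lam i ^ k) * Q⁻¹ *
            (Q * Matrix.diagonal lam * Q⁻¹)
            = Q * (Matrix.diagonal (fun i => lam i ^ k) * Matrix.diagonal lam) * Q⁻¹ := by
          rw [show Q * Matrix.diagonal (fun i => lam i ^ k) * Q⁻¹ *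
              (Q * Matrix.diagonal lam * Q⁻¹)
              = Q * Matrix.diagonal (fun i => lam i ^ k) * (Q⁻¹ * Q) *
                (Matrix.diagonal lam) * Q⁻¹ by noncomm_ring,
            Matrix.nonsing_inv_mul Q hQ]
          noncomm_ring
        rw [this, Matrix.diagonal_mul_diagonal]
        simp [pow_succ]
  have hmap : ∀ k : ℕ, (A ^ k).map (Complex.ofReal ·)
      = Q * Matrix.diagonal (fun i => lam i ^ k) * Q⁻¹ := by
    intro k
    have : (A ^ k).map (Complex.ofReal ·) = (A.map (Complex.ofReal ·)) ^ k := by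
      exact (map_pow (Complex.ofRealHom.mapMatrix) A k)
    rw [this, hA, hconj]
  -- orbit set is f '' P
  have horb : {v : Fin n → ℂ |
      ∃ k : ℕ, v = ((A ^ k).map (Complex.ofReal ·)).mulVec (fun i => (x i : ℂ))}
      = f '' P := by
    ext v
    constructor
    · rintro ⟨k, rfl⟩
      exact ⟨fun i => lam i ^ k, ⟨k, rfl⟩, by rw [hf, hmap k]⟩
    · rintro ⟨w, ⟨k, rfl⟩, rfl⟩
      exact ⟨k, by rw [hf, hmap k]⟩
  -- f is continuous
  have hfc : Continuous f := by
    have : f = fun z => Q.mulVec (fun i => z i * (Q⁻¹.mulVec fun i => (x i : ℂ)) i) := by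
      funext z
      show (Q * Matrix.diagonal z * Q⁻¹).mulVec (fun i => (x i : ℂ))
          = Q.mulVec (fun i => z i * (Q⁻¹.mulVec fun i => (x i : ℂ)) i)
      rw [Matrix.mul_assoc, ← Matrix.mulVec_mulVec, ← Matrix.mulVec_mulVec]
      have hd : (Matrix.diagonal z).mulVec (Q⁻¹.mulVec fun i => (x i : ℂ))
          = fun i => z i * (Q⁻¹.mulVec fun i => (x i : ℂ)) i := by
        funext j; exact Matrix.mulVec_diagonal _ _ j
      rw [hd]
    rw [this]
    have hQc : Continuous fun y : Fin n → ℂ => Q.mulVec y :=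
      LinearMap.continuous_of_finiteDimensional (Matrix.mulVecLin Q)
    exact hQc.comp (by continuity)
  -- closure of P is compact
  have hPb : Bornology.IsBounded P := by
    apply Bornology.IsBounded.subset (Metric.isBounded_closedBall (x := (0 : Fin n → ℂ)) (r := 1))
    rintro w ⟨k, rfl⟩
    simp only [Metric.mem_closedBall, dist_zero_right]
    apply pi_norm_le_iff_of_nonneg zero_le_one |>.2
    intro i
    simp [map_pow, hlam i]
  have hK : IsCompact (closure P) := hPb.isCompact_closure
  -- RHS is f '' closure P
  have hrhs : {v : Fin n → ℂ | ∃ z ∈ closure P, v = f z} = f '' closure P := by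
    ext v; constructor
    · rintro ⟨z, hz, rfl⟩; exact ⟨z, hz, rfl⟩
    · rintro ⟨z, hz, rfl⟩; exact ⟨z, hz, rfl⟩
  rw [horb, hrhs]
  apply Set.Subset.antisymm
  · apply closure_minimal (Set.image_mono subset_closure)
    exact (hK.image hfc).isClosed
  · exact image_closure_subset_closure_image hfc
end
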